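/- Let f : R → S be a homomorphism of rings which is an epimorphism in the category of rings (i.e., for all ring homomorphisms g, h : S → T, g ∘ f = h ∘ f implies g = h), and suppose S is flat as a left R-module (via f). If E is an indecomposable injective right S-module, then E, regarded as a right R-module by restriction of scalars along f, is an indecomposable injective right R-module. -/

import Mathlib

open MulOpposite

universe u

/-- A module is indecomposable if it is nonzero and is not the internal direct sum of
two nonzero submodules. -/
def IsIndecomposable (R M : Type*) [Ring R] [AddCommGroup M] [Module R M] : Prop :=
  (∃ x : M, x ≠ 0) ∧
    ∀ A B : Submodule R M, A ⊓ B = ⊥ → A ⊔ B = ⊤ → A = ⊥ ∨ B = ⊥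

/-- Scalar action of `Rᵐᵒᵖ` on the character module `Hom_ℤ(N, ℚ/ℤ)` of a left `R`-module
`N`, given by `(f • r) (n) = f (r • n)`. -/
instance charSMul (R N : Type*) [Ring R] [AddCommGroup N] [Module R N] :
    SMul Rᵐᵒᵖ (N →+ AddCircle (1 : ℚ)) where
  smul r f :=
    { toFun := fun n => f (r.unop • n)
      map_zero' := by simp
      map_add' := fun a b => by simp [smul_add] }

lemma charSMul_apply {R N : Type*} [Ring R] [AddCommGroup N] [Module R N]
    (r : Rᵐᵒᵖ) (f : N →+ AddCircle (1 : ℚ)) (n : N) : (r • f) n = f (r.unop • n) := rfl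

/-- The right `R`-module structure on the character module `Hom_ℤ(N, ℚ/ℤ)` of a left
`R`-module `N`. -/
instance charModuleOpModule (R N : Type*) [Ring R] [AddCommGroup N]
    [Module R N] : Module Rᵐᵒᵖ (N →+ AddCircle (1 : ℚ)) where
  one_smul f := by ext n; simp [charSMul_apply]
  mul_smul r s f := by ext n; simp [charSMul_apply, mul_smul]
  smul_zero r := by ext n; simp [charSMul_apply]
  smul_add r f g := by ext n; simp [charSMul_apply]
  add_smul r s f := by ext n; simp [charSMul_apply, add_smul]
  zero_smul f := by ext n; simp [charSMul_apply]

/-- **Lambek's criterion**: a left `R`-module `N` is flat iff its character module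
`Hom_ℤ(N, ℚ/ℤ)` is an injective right `R`-module. -/
def IsFlatLeftModule (R N : Type*) [Ring R] [AddCommGroup N] [Module R N] : Prop :=
  Module.Injective Rᵐᵒᵖ (N →+ AddCircle (1 : ℚ))

section Epi
variable {S E : Type u} [Ring S] [AddCommGroup E] [Module Sᵐᵒᵖ E]

/-- The "twisted" additive endomorphism of `E × E` attached to `s : S` and an additive
map `φ : E → E`. -/
def dEnd (φ : E →+ E) (s : S) : AddMonoid.End (E × E) where
  toFun p := (op s • p.1, op s • p.2 + (φ (op s • p.1) - op s • φ p.1))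
  map_zero' := by simp
  map_add' p q := by
    refine Prod.ext ?_ ?_
    · simp [smul_add]
    · simp only [Prod.fst_add, Prod.snd_add, smul_add, map_add]
      abel

lemma dEnd_apply (φ : E →+ E) (s : S) (p : E × E) :
    dEnd φ s p = (op s • p.1, op s • p.2 + (φ (op s • p.1) - op s • φ p.1)) := rfl

lemma dEnd_add (φ : E →+ E) (s t : S) : dEnd φ (s + t) = dEnd φ s + dEnd φ t := by
  refine AddMonoidHom.ext fun p => Prod.ext ?_ ?_
  · show (op (s+t) : Sᵐᵒᵖ) • p.1 = op s • p.1 + op t • p.1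
    rw [show (op (s+t) : Sᵐᵒᵖ) = op s + op t from rfl, add_smul]
  · show (op (s+t) : Sᵐᵒᵖ) • p.2 + (φ ((op (s+t) : Sᵐᵒᵖ) • p.1) - (op (s+t) : Sᵐᵒᵖ) • φ p.1)
      = ((op s : Sᵐᵒᵖ) • p.2 + (φ (op s • p.1) - op s • φ p.1))
        + ((op t : Sᵐᵒᵖ) • p.2 + (φ (op t • p.1) - op t • φ p.1))
    rw [show (op (s+t) : Sᵐᵒᵖ) = op s + op t from rfl]
    simp only [add_smul, map_add]
    abel

/-- The ring hom `S →+* (AddMonoid.End (E × E))ᵐᵒᵖ` with off-diagonal derivation entry. -/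
def gHom (φ : E →+ E) : S →+* (AddMonoid.End (E × E))ᵐᵒᵖ where
  toFun s := op (dEnd φ s)
  map_one' := by
    apply MulOpposite.unop_injective
    refine AddMonoidHom.ext fun p => Prod.ext ?_ ?_
    · show (op (1:S) : Sᵐᵒᵖ) • p.1 = p.1
      rw [op_one, one_smul]
    · show (op (1:S) : Sᵐᵒᵖ) • p.2 + (φ ((op (1:S) : Sᵐᵒᵖ) • p.1) - (op (1:S) : Sᵐᵒᵖ) • φ p.1)
        = p.2
      simp
  map_zero' := by
    apply MulOpposite.unop_injective
    refine AddMonoidHom.ext fun p => Prod.ext ?_ ?_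
    · show (op (0:S) : Sᵐᵒᵖ) • p.1 = 0
      simp
    · show (op (0:S) : Sᵐᵒᵖ) • p.2 + (φ ((op (0:S) : Sᵐᵒᵖ) • p.1) - (op (0:S) : Sᵐᵒᵖ) • φ p.1)
        = 0
      simp
  map_add' s t := by
    apply MulOpposite.unop_injective
    simpa using dEnd_add φ s t
  map_mul' s t := by
    apply MulOpposite.unop_injective
    show dEnd φ (s * t) = (dEnd φ t) * (dEnd φ s)
    refine AddMonoidHom.ext fun p => Prod.ext ?_ ?_
    · show (op (s*t) : Sᵐᵒᵖ) • p.1 = op t • ((op s : Sᵐᵒᵖ) • p.1)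
      rw [← mul_smul]; rfl
    · show (op (s*t) : Sᵐᵒᵖ) • p.2 + (φ ((op (s*t) : Sᵐᵒᵖ) • p.1) - (op (s*t) : Sᵐᵒᵖ) • φ p.1)
        = op t • ((op s : Sᵐᵒᵖ) • p.2 + (φ (op s • p.1) - op s • φ p.1))
          + (φ (op t • (op s : Sᵐᵒᵖ) • p.1) - op t • φ ((op s : Sᵐᵒᵖ) • p.1))
      have h1 : (op (s*t) : Sᵐᵒᵖ) = op t * op s := rfl
      simp only [h1, mul_smul, smul_add, smul_sub]
      abel

/-- The diagonal additive endomorphism. -/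
def diagEnd (s : S) : AddMonoid.End (E × E) where
  toFun p := (op s • p.1, op s • p.2)
  map_zero' := by simp
  map_add' p q := by simp [smul_add]

lemma diagEnd_apply (s : S) (p : E × E) :
    diagEnd (E := E) s p = (op s • p.1, op s • p.2) := rfl

/-- The diagonal ring hom. -/
def hHom : S →+* (AddMonoid.End (E × E))ᵐᵒᵖ where
  toFun s := op (diagEnd s)
  map_one' := by
    apply MulOpposite.unop_injective
    refine AddMonoidHom.ext fun p => Prod.ext ?_ ?_
    · show (op (1:S) : Sᵐᵒᵖ) • p.1 = p.1
      rw [op_one, one_smul]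
    · show (op (1:S) : Sᵐᵒᵖ) • p.2 = p.2
      rw [op_one, one_smul]
  map_zero' := by
    apply MulOpposite.unop_injective
    refine AddMonoidHom.ext fun p => Prod.ext ?_ ?_
    · show (op (0:S) : Sᵐᵒᵖ) • p.1 = 0
      simp
    · show (op (0:S) : Sᵐᵒᵖ) • p.2 = 0
      simp
  map_add' s t := by
    apply MulOpposite.unop_injective
    refine AddMonoidHom.ext fun p => Prod.ext ?_ ?_ <;>
      · show (op (s+t) : Sᵐᵒᵖ) • _ = (op s : Sᵐᵒᵖ) • _ + (op t : Sᵐᵒᵖ) • _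
        rw [show (op (s+t) : Sᵐᵒᵖ) = op s + op t from rfl, add_smul]
  map_mul' s t := by
    apply MulOpposite.unop_injective
    refine AddMonoidHom.ext fun p => Prod.ext ?_ ?_ <;>
      · show (op (s*t) : Sᵐᵒᵖ) • _ = op t • ((op s : Sᵐᵒᵖ) • _)
        rw [← mul_smul]; rfl

end Epi

/-- key: epi ⇒ R-linear maps between S-modules are S-linear. -/
lemma epi_smul_comm {R S : Type u} [Ring R] [Ring S] (f : R →+* S)
    (hepi : ∀ (T : Type u) [Ring T] (g h : S →+* T), g.comp f = h.comp f → g = h)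
    {E : Type u} [AddCommGroup E] [Module Sᵐᵒᵖ E] [Module Rᵐᵒᵖ E]
    (hres : ∀ (r : R) (x : E), (op r : Rᵐᵒᵖ) • x = (op (f r) : Sᵐᵒᵖ) • x)
    (φ : E →ₗ[Rᵐᵒᵖ] E) (s : S) (x : E) : φ (op s • x) = op s • φ x := by
  have hcomp : (gHom (E := E) φ.toAddMonoidHom).comp f = (hHom (E := E)).comp f := by
    ext r
    apply MulOpposite.unop_injective
    refine AddMonoidHom.ext fun p => Prod.ext ?_ ?_
    · rfl
    · show (op (f r) : Sᵐᵒᵖ) • p.2 + (φ ((op (f r) : Sᵐᵒᵖ) • p.1) - (op (f r) : Sᵐᵒᵖ) • φ p.1)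
        = (op (f r) : Sᵐᵒᵖ) • p.2
      rw [← hres r p.1, ← hres r (φ p.1), map_smul, sub_self, add_zero]
  have heq := hepi _ _ _ hcomp
  have h2 : ((gHom (E := E) φ.toAddMonoidHom s).unop (x, 0)).2
      = ((hHom (E := E) s).unop (x, 0)).2 := by rw [heq]
  have h3 : (op s : Sᵐᵒᵖ) • (0:E) + (φ ((op s : Sᵐᵒᵖ) • x) - (op s : Sᵐᵒᵖ) • φ x)
      = (op s : Sᵐᵒᵖ) • (0:E) := h2
  rw [smul_zero, zero_add] at h3
  exact sub_eq_zero.mp h3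

section CharPhi
variable {S : Type u} [Ring S]

/-- auxiliary character `s ↦ χ (op s • y)`. -/
def charPhiAux {E : Type u} [AddCommGroup E] [Module Sᵐᵒᵖ E]
    (χ : E →+ AddCircle (1 : ℚ)) (y : E) : S →+ AddCircle (1 : ℚ) where
  toFun s := χ (op s • y)
  map_zero' := by simp
  map_add' a b := by
    show χ (op (a + b) • y) = χ (op a • y) + χ (op b • y)
    rw [op_add, add_smul, map_add]

lemma charPhiAux_apply {E : Type u} [AddCommGroup E] [Module Sᵐᵒᵖ E]
    (χ : E →+ AddCircle (1 : ℚ)) (y : E) (s : S) :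
    charPhiAux χ y s = χ (op s • y) := rfl

end CharPhi

/-- Baer's criterion for `E` over `Rᵐᵒᵖ`, from flatness of `S` and injectivity over `Sᵐᵒᵖ`. -/
lemma flat_baer {R S : Type u} [Ring R] [Ring S] (f : R →+* S)
    [Module R S] (hsmul : ∀ (r : R) (s : S), r • s = f r * s)
    (hflat : IsFlatLeftModule R S)
    {E : Type u} [AddCommGroup E] [Module Sᵐᵒᵖ E] (hEinj : Module.Injective Sᵐᵒᵖ E)
    [Module Rᵐᵒᵖ E] (hres : ∀ (r : R) (x : E), (op r : Rᵐᵒᵖ) • x = (op (f r) : Sᵐᵒᵖ) • x) :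
    Module.Baer Rᵐᵒᵖ E := by
  intro I g
  classical
  have hflat' : Module.Injective Rᵐᵒᵖ (S →+ AddCircle (1:ℚ)) := hflat
  set gens : Set (Sᵐᵒᵖ × E) :=
    Set.range (fun i : I => ((op (f (i : Rᵐᵒᵖ).unop), g i) : Sᵐᵒᵖ × E)) with hgens
  set Γ : Submodule Sᵐᵒᵖ (Sᵐᵒᵖ × E) := Submodule.span Sᵐᵒᵖ gens with hΓ
  -- key computation on the span
  have key : ∀ p ∈ Γ, ∀ (χ : E →+ AddCircle (1:ℚ)) (ψ : S →+ AddCircle (1:ℚ)),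
      (∀ (i : I) (s : S), χ (op s • g i) = ψ (f (i : Rᵐᵒᵖ).unop * s)) →
      ∀ s : S, χ (op s • p.2) = ψ (p.1.unop * s) := by
    intro p hp χ ψ hgen
    induction hp using Submodule.span_induction with
    | mem q hq =>
      obtain ⟨i, rfl⟩ := hq
      intro s
      simpa using hgen i s
    | zero => intro s; simp
    | add a b _ _ ha hb =>
      intro s
      have : (op s : Sᵐᵒᵖ) • (a + b).2 = op s • a.2 + op s • b.2 := by
        rw [Prod.snd_add, smul_add]
      rw [this, map_add, ha s, hb s, Prod.fst_add, unop_add, add_mul, map_add]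
    | smul u q _ hq =>
      intro s
      have hop : (op (u.unop * s) : Sᵐᵒᵖ) = op s * u := by rw [op_mul, op_unop]
      have h1 : (op s : Sᵐᵒᵖ) • (u • q).2 = op (u.unop * s) • q.2 := by
        rw [Prod.smul_snd, ← mul_smul, hop]
      have h2 : (u • q).1.unop * s = q.1.unop * (u.unop * s) := by
        rw [Prod.smul_fst, smul_eq_mul, unop_mul, mul_assoc]
      rw [h1, h2]
      exact hq (u.unop * s)
  -- kernel triviality
  have h0 : ∀ p ∈ Γ, p.1 = 0 → p.2 = 0 := by
    intro p hp hp1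
    refine CharacterModule.eq_zero_of_character_apply (fun c => ?_)
    set χ : E →+ AddCircle (1:ℚ) := c with hχ
    -- build the linear map Φ : I →ₗ[Rᵐᵒᵖ] (S →+ AddCircle 1)
    set Φ : ↥I →ₗ[Rᵐᵒᵖ] (S →+ AddCircle (1:ℚ)) :=
      { toFun := fun i => charPhiAux χ (g i)
        map_add' := fun i j => by
          refine AddMonoidHom.ext fun s => ?_
          show charPhiAux χ (g (i + j)) s = charPhiAux χ (g i) s + charPhiAux χ (g j) s
          rw [charPhiAux_apply, charPhiAux_apply, charPhiAux_apply, map_add, smul_add, map_add]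
        map_smul' := fun r i => by
          refine AddMonoidHom.ext fun s => ?_
          show charPhiAux χ (g (r • i)) s = (r • charPhiAux χ (g i)) s
          rw [charPhiAux_apply, charSMul_apply, charPhiAux_apply, g.map_smul, hsmul]
          have hr : r • g i = (op (f r.unop) : Sᵐᵒᵖ) • g i := hres r.unop (g i)
          rw [hr, ← mul_smul, ← op_mul] } with hΦ
    obtain ⟨Ψ, hΨ⟩ := hflat'.out I.subtype I.injective_subtype Φ
    set ψ : S →+ AddCircle (1:ℚ) := Ψ 1 with hψ
    have hgen : ∀ (i : I) (s : S), χ (op s • g i) = ψ (f (i : Rᵐᵒᵖ).unop * s) := by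
      intro i s
      have e1 : Ψ (i : Rᵐᵒᵖ) = Φ i := hΨ i
      have e2 : Ψ (i : Rᵐᵒᵖ) = (i : Rᵐᵒᵖ) • ψ := by
        conv_lhs => rw [show (i : Rᵐᵒᵖ) = (i : Rᵐᵒᵖ) • (1 : Rᵐᵒᵖ) by rw [smul_eq_mul, mul_one]]
        rw [map_smul]
      have h3 := congrArg (fun (t : S →+ AddCircle (1:ℚ)) => t s) (e1.symm.trans e2)
      rw [show (Φ i) s = χ (op s • g i) from rfl] at h3
      rw [h3, charSMul_apply, hsmul]
    have hlast := key p hp χ ψ hgen 1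
    rw [hp1] at hlast
    simp at hlast
    exact hlast
  -- the projection from Γ is injective
  have hinj : Function.Injective ((LinearMap.fst Sᵐᵒᵖ Sᵐᵒᵖ E).comp Γ.subtype) := by
    intro a b hab
    have hmem : ((a : Sᵐᵒᵖ × E) - b) ∈ Γ := sub_mem a.2 b.2
    have h1 : ((a : Sᵐᵒᵖ × E) - b).1 = 0 := by
      have : (a : Sᵐᵒᵖ × E).1 = (b : Sᵐᵒᵖ × E).1 := hab
      rw [Prod.fst_sub, this, sub_self]
    have h2 := h0 _ hmem h1
    rw [Prod.snd_sub, sub_eq_zero] at h2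
    have : (a : Sᵐᵒᵖ × E) = b := Prod.ext (by rw [Prod.fst_sub] at h1; exact sub_eq_zero.mp h1) h2
    exact Subtype.ext this
  obtain ⟨h, hh⟩ := hEinj.out ((LinearMap.fst Sᵐᵒᵖ Sᵐᵒᵖ E).comp Γ.subtype) hinj
    ((LinearMap.snd Sᵐᵒᵖ Sᵐᵒᵖ E).comp Γ.subtype)
  refine ⟨LinearMap.toSpanSingleton Rᵐᵒᵖ E (h 1), fun x hx => ?_⟩
  have hmemγ : ((op (f x.unop), g ⟨x, hx⟩) : Sᵐᵒᵖ × E) ∈ Γ :=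
    Submodule.subset_span ⟨⟨x, hx⟩, rfl⟩
  have e1 : h (op (f x.unop)) = g ⟨x, hx⟩ := hh ⟨(op (f x.unop), g ⟨x, hx⟩), hmemγ⟩
  have e2 : (op (f x.unop) : Sᵐᵒᵖ) • (1 : Sᵐᵒᵖ) = op (f x.unop) := by
    rw [smul_eq_mul, mul_one]
  calc LinearMap.toSpanSingleton Rᵐᵒᵖ E (h 1) x = x • h 1 := rfl
    _ = (op (f x.unop) : Sᵐᵒᵖ) • h 1 := by conv_lhs => rw [← op_unop x]; rw [hres]
    _ = h ((op (f x.unop) : Sᵐᵒᵖ) • 1) := (map_smul h _ _).symm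
    _ = h (op (f x.unop)) := by rw [e2]
    _ = g ⟨x, hx⟩ := e1

theorem stmt5 {R S : Type u} [Ring R] [Ring S] (f : R →+* S)
    -- `f` is an epimorphism in the category of rings:
    (hepi : ∀ (T : Type u) [Ring T] (g h : S →+* T), g.comp f = h.comp f → g = h)
    -- `S` is flat as a left `R`-module via `f` (the action being `r • s = f r * s`):
    [Module R S] (hsmul : ∀ (r : R) (s : S), r • s = f r * s)
    (hflat : IsFlatLeftModule R S)
    -- `E` is an indecomposable injective right `S`-module:
    {E : Type u} [AddCommGroup E] [Module Sᵐᵒᵖ E]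
    (hEind : IsIndecomposable Sᵐᵒᵖ E) (hEinj : Module.Injective Sᵐᵒᵖ E)
    -- the right `R`-module structure on `E` obtained by restriction of scalars along `f`:
    [Module Rᵐᵒᵖ E] (hres : ∀ (r : R) (x : E), (op r : Rᵐᵒᵖ) • x = (op (f r) : Sᵐᵒᵖ) • x) :
    IsIndecomposable Rᵐᵒᵖ E ∧ Module.Injective Rᵐᵒᵖ E := by
  constructor
  · refine ⟨hEind.1, fun A B hinf hsup => ?_⟩
    have hc : IsCompl A B := ⟨disjoint_iff.mpr hinf, codisjoint_iff.mpr hsup⟩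
    set π : E →ₗ[Rᵐᵒᵖ] E := A.subtype ∘ₗ (A.linearProjOfIsCompl B hc) with hπ
    have hπA : ∀ x ∈ A, π x = x := by
      intro x hx
      have := Submodule.linearProjOfIsCompl_apply_left hc ⟨x, hx⟩
      simp only [hπ, LinearMap.comp_apply, Submodule.subtype_apply]
      exact congrArg Subtype.val this
    have hπB : ∀ x ∈ B, π x = 0 := by
      intro x hx
      simp only [hπ, LinearMap.comp_apply, Submodule.subtype_apply]
      exact congrArg Subtype.val (Submodule.linearProjOfIsCompl_apply_right' hc hx)
    have hπmem : ∀ x, π x ∈ A := fun x => (A.linearProjOfIsCompl B hc x).2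
    have hπker : ∀ x, π x = 0 → x ∈ B := by
      intro x hx0
      simp only [hπ, LinearMap.comp_apply, Submodule.subtype_apply] at hx0
      have : A.linearProjOfIsCompl B hc x = 0 := by
        exact Subtype.ext hx0
      exact (Submodule.linearProjOfIsCompl_apply_eq_zero_iff hc).mp this
    have hcomm := epi_smul_comm f hepi hres π
    set A' : Submodule Sᵐᵒᵖ E :=
      { carrier := (A : Set E)
        add_mem' := fun h1 h2 => A.add_mem h1 h2
        zero_mem' := A.zero_mem
        smul_mem' := by
          intro u x hx
          have h1 : π (op u.unop • x) = op u.unop • π x := hcomm u.unop x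
          have h2 : π x = x := hπA x hx
          have h3 : π (u • x) = u • x := by rw [← op_unop u]; rw [h1, h2]
          rw [← h3]
          exact hπmem _ } with hA'
    set B' : Submodule Sᵐᵒᵖ E :=
      { carrier := (B : Set E)
        add_mem' := fun h1 h2 => B.add_mem h1 h2
        zero_mem' := B.zero_mem
        smul_mem' := by
          intro u x hx
          have h1 : π (op u.unop • x) = op u.unop • π x := hcomm u.unop x
          have h3 : π (u • x) = 0 := by
            rw [← op_unop u, h1, hπB x hx, smul_zero]
          exact hπker _ h3 } with hB'
    have hmemA' : ∀ x, x ∈ A' ↔ x ∈ A := fun x => Iff.rfl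
    have hmemB' : ∀ x, x ∈ B' ↔ x ∈ B := fun x => Iff.rfl
    have h2 := hEind.2 A' B' ?_ ?_
    · rcases h2 with h | h
      · left
        rw [eq_bot_iff]
        intro x hx
        have : x ∈ A' := (hmemA' x).mpr hx
        rw [h] at this
        exact this
      · right
        rw [eq_bot_iff]
        intro x hx
        have : x ∈ B' := (hmemB' x).mpr hx
        rw [h] at this
        exact this
    · rw [eq_bot_iff]
      intro x hx
      have hx' : x ∈ A ⊓ B := ⟨((Submodule.mem_inf).mp hx).1, ((Submodule.mem_inf).mp hx).2⟩
      rw [hinf] at hx'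
      exact hx'
    · rw [eq_top_iff]
      intro x _
      have : x ∈ A ⊔ B := by rw [hsup]; trivial
      obtain ⟨a, ha, b, hb, rfl⟩ := Submodule.mem_sup.mp this
      exact Submodule.add_mem _ (Submodule.mem_sup_left ha) (Submodule.mem_sup_right hb)
  · exact Module.Baer.injective (flat_baer f hsmul hflat hEinj hres)
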